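/- Second Isomorphism Theorem (similarity-based): for any isomorphism H : A → B of L-algebras and elements a, b, c, d ∈ A, a : b ≈_A c : d holds if and only if Ha : Hb ≈_B Hc : Hd holds. -/
import Mathlib


/-- Terms over a language `L` of function symbols with arities `ar`,
with variables indexed by `ℕ`. -/
inductive Term (L : Type) (ar : L → ℕ) : Type
  | var : ℕ → Term L ar
  | app : (f : L) → (Fin (ar f) → Term L ar) → Term L ar

/-- An `L`-algebra. -/
structure Alg (L : Type) (ar : L → ℕ) where
  carrier : Type
  op : (f : L) → (Fin (ar f) → carrier) → carrier

/-- Evaluation of a term in an algebra under an assignment of the variables. -/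
def Term.eval {L : Type} {ar : L → ℕ} (A : Alg L ar) (ρ : ℕ → A.carrier) :
    Term L ar → A.carrier
  | .var n => ρ n
  | .app f ts => A.op f fun i => (ts i).eval A ρ

/-- Homomorphisms of `L`-algebras. -/
def IsHom {L : Type} {ar : L → ℕ} (A B : Alg L ar) (H : A.carrier → B.carrier) : Prop :=
  ∀ (f : L) (as : Fin (ar f) → A.carrier), H (A.op f as) = B.op f (H ∘ as)

/-- Justifications of an arrow `a → b`: pairs of terms `(s, t)` realized under
a common assignment. -/
def Jus {L : Type} {ar : L → ℕ} (A : Alg L ar) (p : A.carrier × A.carrier) :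
    Set (Term L ar × Term L ar) :=
  {st | ∃ ρ : ℕ → A.carrier, st.1.eval A ρ = p.1 ∧ st.2.eval A ρ = p.2}

/-- Trivial justifications in `(A, B)`: those justifying every arrow in `A` and in `B`. -/
def TrivJus {L : Type} {ar : L → ℕ} (A B : Alg L ar) : Set (Term L ar × Term L ar) :=
  {st | (∀ p : A.carrier × A.carrier, st ∈ Jus A p) ∧
        (∀ q : B.carrier × B.carrier, st ∈ Jus B q)}

/-- The arrow relation `(a→b) ≲_{(A,B)} (c→d)`: either all justifications on either side
are trivial, or the common justifications include a non-trivial one and form a maximal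
set among common justification sets with arrows of `B`. -/
def ArrLe {L : Type} {ar : L → ℕ} (A B : Alg L ar)
    (p : A.carrier × A.carrier) (q : B.carrier × B.carrier) : Prop :=
  (Jus A p ∪ Jus B q ⊆ TrivJus A B) ∨
  (TrivJus A B ⊂ Jus A p ∩ Jus B q ∧
    ∀ q' : B.carrier × B.carrier,
      TrivJus A B ⊂ Jus A p ∩ Jus B q → Jus A p ∩ Jus B q ⊆ Jus A p ∩ Jus B q' →
        TrivJus A B ⊂ Jus A p ∩ Jus B q' ∧ Jus A p ∩ Jus B q' ⊆ Jus A p ∩ Jus B q)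

/-- Similarity-based analogical proportion `a : b ≈_{(A,B)} c : d`. -/
def AP {L : Type} {ar : L → ℕ} (A B : Alg L ar) (a b : A.carrier) (c d : B.carrier) : Prop :=
  ArrLe A B (a, b) (c, d) ∧ ArrLe A B (b, a) (d, c) ∧
  ArrLe B A (c, d) (a, b) ∧ ArrLe B A (d, c) (b, a)

/-- Generalizations of an element. -/
def Gen {L : Type} {ar : L → ℕ} (A : Alg L ar) (a : A.carrier) : Set (Term L ar) :=
  {s | ∃ ρ : ℕ → A.carrier, s.eval A ρ = a}

/-- Trivial generalizations in `(A, B)`. -/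
def TrivGen {L : Type} {ar : L → ℕ} (A B : Alg L ar) : Set (Term L ar) :=
  {s | (∀ a : A.carrier, s ∈ Gen A a) ∧ (∀ b : B.carrier, s ∈ Gen B b)}

/-- `a ≲_{(A,B)} b` for elements. -/
def SimLe {L : Type} {ar : L → ℕ} (A B : Alg L ar) (a : A.carrier) (b : B.carrier) : Prop :=
  (Gen A a ∪ Gen B b ⊆ TrivGen A B) ∨
  (TrivGen A B ⊂ Gen A a ∩ Gen B b ∧
    ∀ b' : B.carrier,
      TrivGen A B ⊂ Gen A a ∩ Gen B b → Gen A a ∩ Gen B b ⊆ Gen A a ∩ Gen B b' →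
        TrivGen A B ⊂ Gen A a ∩ Gen B b' ∧ Gen A a ∩ Gen B b' ⊆ Gen A a ∩ Gen B b)

/-- The similarity relation `a ≈_{(A,B)} b`. -/
def Sim {L : Type} {ar : L → ℕ} (A B : Alg L ar) (a : A.carrier) (b : B.carrier) : Prop :=
  SimLe A B a b ∧ SimLe B A b a

lemma eval_hom' {L : Type} {ar : L → ℕ} (A B : Alg L ar) (H : A.carrier → B.carrier)
    (hH : IsHom A B H) (ρ : ℕ → A.carrier) :
    ∀ t : Term L ar, Term.eval B (H ∘ ρ) t = H (Term.eval A ρ t)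
  | .var n => rfl
  | .app f ts => by
    show B.op f (fun i => Term.eval B (H ∘ ρ) (ts i)) = H (A.op f fun i => Term.eval A ρ (ts i))
    rw [hH]
    congr 1
    funext i
    exact eval_hom' A B H hH ρ (ts i)

lemma jus_eq' {L : Type} {ar : L → ℕ} (A B : Alg L ar) (H : A.carrier → B.carrier)
    (G : B.carrier → A.carrier) (hH : IsHom A B H) (hG : IsHom B A G)
    (hGH : ∀ x, G (H x) = x) (hHG : ∀ y, H (G y) = y) (p : A.carrier × A.carrier) :
    Jus B (H p.1, H p.2) = Jus A p := by
  ext st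
  constructor
  · rintro ⟨ρ, h1, h2⟩
    refine ⟨G ∘ ρ, ?_, ?_⟩
    · have h := eval_hom' A B H hH (G ∘ ρ) st.1
      have hc : H ∘ (G ∘ ρ) = ρ := funext fun n => hHG _
      rw [hc] at h
      have := congrArg G h
      rw [hGH] at this
      rw [← this, h1, hGH]
    · have h := eval_hom' A B H hH (G ∘ ρ) st.2
      have hc : H ∘ (G ∘ ρ) = ρ := funext fun n => hHG _
      rw [hc] at h
      have := congrArg G h
      rw [hGH] at this
      rw [← this, h2, hGH]
  · rintro ⟨ρ, h1, h2⟩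
    exact ⟨H ∘ ρ, by rw [eval_hom' A B H hH, h1], by rw [eval_hom' A B H hH, h2]⟩

lemma jusB_eq' {L : Type} {ar : L → ℕ} (A B : Alg L ar) (H : A.carrier → B.carrier)
    (G : B.carrier → A.carrier) (hH : IsHom A B H) (hG : IsHom B A G)
    (hGH : ∀ x, G (H x) = x) (hHG : ∀ y, H (G y) = y) (q : B.carrier × B.carrier) :
    Jus B q = Jus A (G q.1, G q.2) := by
  have := jus_eq' A B H G hH hG hGH hHG (G q.1, G q.2)
  simp only [hHG] at this
  rw [← this]

lemma triv_eq' {L : Type} {ar : L → ℕ} (A B : Alg L ar) (H : A.carrier → B.carrier)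
    (G : B.carrier → A.carrier) (hH : IsHom A B H) (hG : IsHom B A G)
    (hGH : ∀ x, G (H x) = x) (hHG : ∀ y, H (G y) = y) :
    TrivJus B B = TrivJus A A := by
  ext st
  simp only [TrivJus, Set.mem_setOf_eq]
  constructor
  · rintro ⟨h, -⟩
    have hA : ∀ p : A.carrier × A.carrier, st ∈ Jus A p := fun p => by
      rw [← jus_eq' A B H G hH hG hGH hHG p]; exact h _
    exact ⟨hA, hA⟩
  · rintro ⟨h, -⟩
    have hB : ∀ q : B.carrier × B.carrier, st ∈ Jus B q := fun q => by
      rw [jusB_eq' A B H G hH hG hGH hHG q]; exact h _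
    exact ⟨hB, hB⟩

lemma arrle_iff' {L : Type} {ar : L → ℕ} (A B : Alg L ar) (H : A.carrier → B.carrier)
    (G : B.carrier → A.carrier) (hH : IsHom A B H) (hG : IsHom B A G)
    (hGH : ∀ x, G (H x) = x) (hHG : ∀ y, H (G y) = y) (p q : A.carrier × A.carrier) :
    ArrLe A A p q ↔ ArrLe B B (H p.1, H p.2) (H q.1, H q.2) := by
  unfold ArrLe
  rw [jus_eq' A B H G hH hG hGH hHG p, jus_eq' A B H G hH hG hGH hHG q,
    triv_eq' A B H G hH hG hGH hHG]
  constructor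
  · rintro (h | ⟨h1, h2⟩)
    · exact Or.inl h
    · refine Or.inr ⟨h1, fun q' hs hsub => ?_⟩
      rw [jusB_eq' A B H G hH hG hGH hHG q'] at hsub ⊢
      exact h2 (G q'.1, G q'.2) hs hsub
  · rintro (h | ⟨h1, h2⟩)
    · exact Or.inl h
    · refine Or.inr ⟨h1, fun q' hs hsub => ?_⟩
      rw [← jus_eq' A B H G hH hG hGH hHG q'] at hsub ⊢
      exact h2 (H q'.1, H q'.2) hs hsub

/-- Second Isomorphism Theorem (similarity-based):
`a : b ≈_A c : d  ↔  Ha : Hb ≈_B Hc : Hd`. -/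
theorem second_isomorphism_theorem {L : Type} {ar : L → ℕ} (A B : Alg L ar)
    (H : A.carrier → B.carrier) (G : B.carrier → A.carrier)
    (hH : IsHom A B H) (hG : IsHom B A G)
    (hGH : ∀ x, G (H x) = x) (hHG : ∀ y, H (G y) = y)
    (a b c d : A.carrier) :
    AP A A a b c d ↔ AP B B (H a) (H b) (H c) (H d) := by
  unfold AP
  exact and_congr (arrle_iff' A B H G hH hG hGH hHG (a, b) (c, d))
    (and_congr (arrle_iff' A B H G hH hG hGH hHG (b, a) (d, c))
      (and_congr (arrle_iff' A B H G hH hG hGH hHG (c, d) (a, b))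
        (arrle_iff' A B H G hH hG hGH hHG (d, c) (b, a))))
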